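/- Let G be a trivalent, 2-edge-connected finite graph of genus g = h¹(G) (so |V| = 2g−2 and |E| = 3g−3). Then the rank of the graph curve matroid M_G equals g − 1, i.e., half the number of vertices. -/

import Mathlib

open Relation

section QuotTools
variable {α : Type*}

/-- add a symmetric pair to a relation -/
def pext (r : α → α → Prop) (a b : α) : α → α → Prop :=
  fun x y => r x y ∨ (x = a ∧ y = b) ∨ (x = b ∧ y = a)

theorem eqvGen_pext {r : α → α → Prop} {a b x y : α}
    (h : EqvGen (pext r a b) x y) :
    EqvGen r x y ∨ (EqvGen r x a ∧ EqvGen r b y) ∨ (EqvGen r x b ∧ EqvGen r a y) := by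
  induction h with
  | rel x y h =>
    rcases h with h | ⟨rfl, rfl⟩ | ⟨rfl, rfl⟩
    · exact Or.inl (.rel _ _ h)
    · exact Or.inr (Or.inl ⟨.refl _, .refl _⟩)
    · exact Or.inr (Or.inr ⟨.refl _, .refl _⟩)
  | refl x => exact Or.inl (.refl _)
  | symm x y _ ih =>
    rcases ih with h | ⟨h1, h2⟩ | ⟨h1, h2⟩
    · exact Or.inl (h.symm _ _)
    · exact Or.inr (Or.inr ⟨h2.symm _ _, h1.symm _ _⟩)
    · exact Or.inr (Or.inl ⟨h2.symm _ _, h1.symm _ _⟩)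
  | trans x y z _ _ ih1 ih2 =>
    rcases ih1 with h | ⟨h1, h2⟩ | ⟨h1, h2⟩ <;>
      rcases ih2 with h' | ⟨h1', h2'⟩ | ⟨h1', h2'⟩
    · exact Or.inl (h.trans _ _ _ h')
    · exact Or.inr (Or.inl ⟨h.trans _ _ _ h1', h2'⟩)
    · exact Or.inr (Or.inr ⟨h.trans _ _ _ h1', h2'⟩)
    · exact Or.inr (Or.inl ⟨h1, h2.trans _ _ _ h'⟩)
    · exact Or.inr (Or.inl ⟨h1, h2'⟩)
    · exact Or.inl (h1.trans _ _ _ h2')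
    · exact Or.inr (Or.inr ⟨h1, h2.trans _ _ _ h'⟩)
    · exact Or.inl (h1.trans _ _ _ h2')
    · exact Or.inr (Or.inr ⟨h1, h2'⟩)
end QuotTools

section QuotCard
variable {α : Type*} [Finite α] {r : α → α → Prop} {a b : α}

theorem card_quot_le_of_imp {s : α → α → Prop} (h : ∀ x y, r x y → EqvGen s x y) :
    Nat.card (Quot s) ≤ Nat.card (Quot r) := by
  have hs : Function.Surjective
      (Quot.lift (Quot.mk s) (fun x y hxy => Quot.eqvGen_sound (h x y hxy)) : Quot r → Quot s) := by
    intro q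
    obtain ⟨x, rfl⟩ := Quot.exists_rep q
    exact ⟨Quot.mk r x, rfl⟩
  exact Nat.card_le_card_of_surjective _ hs

theorem card_quot_congr {s : α → α → Prop} (h : ∀ x y, r x y ↔ s x y) :
    Nat.card (Quot r) = Nat.card (Quot s) :=
  le_antisymm (card_quot_le_of_imp fun x y hxy => .rel x y ((h x y).2 hxy))
    (card_quot_le_of_imp fun x y hxy => .rel x y ((h x y).1 hxy))

theorem card_quot_pext_le : Nat.card (Quot (pext r a b)) ≤ Nat.card (Quot r) :=
  card_quot_le_of_imp fun x y hxy => .rel x y (Or.inl hxy)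

open Classical in
theorem card_quot_le_pext_add_one :
    Nat.card (Quot r) ≤ Nat.card (Quot (pext r a b)) + 1 := by
  set p := pext r a b with hp
  have hwd : ∀ x y, r x y → Quot.mk p x = Quot.mk p y :=
    fun x y hxy => Quot.sound (Or.inl hxy)
  set π : Quot r → Quot p := Quot.lift (Quot.mk p) hwd with hπ
  have hπmk : ∀ x, π (Quot.mk r x) = Quot.mk p x := fun x => rfl
  set f : Quot r → Quot p ⊕ Unit :=
    fun q => if q = Quot.mk r b then Sum.inr () else Sum.inl (π q) with hf
  have hinj : Function.Injective f := by
    intro q1 q2 h12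
    by_cases h1 : q1 = Quot.mk r b
    · by_cases h2 : q2 = Quot.mk r b
      · exact h1.trans h2.symm
      · rw [hf] at h12
        simp only [if_pos h1, if_neg h2] at h12
        cases h12
    · by_cases h2 : q2 = Quot.mk r b
      · rw [hf] at h12
        simp only [if_pos h2, if_neg h1] at h12
        cases h12
      · rw [hf] at h12
        simp only [if_neg h1, if_neg h2, Sum.inl.injEq] at h12
        obtain ⟨x, rfl⟩ := Quot.exists_rep q1
        obtain ⟨y, rfl⟩ := Quot.exists_rep q2
        rw [hπmk, hπmk, Quot.eq] at h12
        rcases eqvGen_pext h12 with h | ⟨ha1, ha2⟩ | ⟨ha1, ha2⟩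
        · exact Quot.eqvGen_sound h
        · exact absurd (Quot.eqvGen_sound ((ha2.symm _ _))) h2
        · exact absurd (Quot.eqvGen_sound ha1) h1
  calc Nat.card (Quot r) ≤ Nat.card (Quot p ⊕ Unit) := Nat.card_le_card_of_injective f hinj
    _ = Nat.card (Quot p) + 1 := by simp [Nat.card_sum]

theorem card_quot_pext_eq (h : EqvGen r a b) :
    Nat.card (Quot (pext r a b)) = Nat.card (Quot r) := by
  refine le_antisymm card_quot_pext_le (card_quot_le_of_imp ?_)
  rintro x y (hxy | ⟨rfl, rfl⟩ | ⟨rfl, rfl⟩)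
  · exact .rel _ _ hxy
  · exact h
  · exact h.symm _ _

theorem card_quot_pext_lt (h : ¬ EqvGen r a b) :
    Nat.card (Quot (pext r a b)) < Nat.card (Quot r) := by
  classical
  have : Fintype (Quot r) := Fintype.ofFinite _
  have : Fintype (Quot (pext r a b)) := Fintype.ofFinite _
  have hwd : ∀ x y, r x y → Quot.mk (pext r a b) x = Quot.mk (pext r a b) y :=
    fun x y hxy => Quot.sound (Or.inl hxy)
  rw [Nat.card_eq_fintype_card, Nat.card_eq_fintype_card]
  refine Fintype.card_lt_of_surjective_not_injective (Quot.lift (Quot.mk _) hwd) ?_ ?_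
  · intro q
    obtain ⟨x, rfl⟩ := Quot.exists_rep q
    exact ⟨Quot.mk r x, rfl⟩
  · intro hinj
    have hab : Quot.lift (Quot.mk (pext r a b)) hwd (Quot.mk r a)
        = Quot.lift (Quot.mk (pext r a b)) hwd (Quot.mk r b) :=
      Quot.sound (Or.inr (Or.inl ⟨rfl, rfl⟩))
    have h2 := hinj (a₁ := Quot.mk r a) (a₂ := Quot.mk r b) hab
    rw [Quot.eq] at h2
    exact h h2

theorem card_quot_le_card (r : α → α → Prop) : Nat.card (Quot r) ≤ Nat.card α :=
  Nat.card_le_card_of_surjective (Quot.mk r) Quot.mk_surjective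

theorem card_quot_bot (h : ∀ x y, r x y → x = y) : Nat.card (Quot r) = Nat.card α := by
  refine le_antisymm (card_quot_le_card r) (Nat.card_le_card_of_injective (Quot.mk r) ?_)
  intro x y hxy
  rw [Quot.eq] at hxy
  induction hxy with
  | rel _ _ h' => exact h _ _ h'
  | refl => rfl
  | symm _ _ _ ih => exact ih.symm
  | trans _ _ _ _ _ ih1 ih2 => exact ih1.trans ih2
end QuotCard


/-- A finite undirected multigraph on vertex type `V` with edge type `E`:
each edge has an unordered pair of endpoints (possibly a loop). -/
structure Multigraph (V E : Type*) where
  ends : E → Sym2 V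

namespace Multigraph

variable {V E : Type*} (G : Multigraph V E)

/-- `δ(A)`: the set of edges incident to at least one vertex of `A`. -/
def inc (A : Set V) : Set E := {e | ∃ v ∈ A, v ∈ G.ends e}

/-- Number of connected components of the spanning subgraph of `G`
with edge set `B` (on the full vertex set `V`). -/
noncomputable def numComponentsEdges (B : Set E) : ℕ :=
  Nat.card (Quot (fun u v : V => ∃ e ∈ B, G.ends e = s(u, v)))

/-- Number of connected components `ω(S)` of the subgraph of `G` induced on `S`. -/
noncomputable def numComponentsSub (S : Set V) : ℕ :=
  Nat.card (Quot (fun x y : S => ∃ e, G.ends e = s(x.1, y.1)))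

/-- Rank function of the cycle (graphic) matroid of `G`:
`r(B) = |V| - (number of components of (V, B))`. -/
noncomputable def cycleRank (B : Set E) : ℕ :=
  Nat.card V - G.numComponentsEdges B

/-- Rank function `r*` of the bond (cographic) matroid of `G`:
`r*(B) = |B| + r(E - B) - r(E)`. -/
noncomputable def bondRank (B : Set E) : ℕ :=
  B.ncard + G.cycleRank Bᶜ - G.cycleRank Set.univ

/-- `G` is connected. -/
def Connected : Prop := G.numComponentsEdges Set.univ = 1

/-- `G` is 2-edge-connected: it is connected and deleting any single edge
leaves it connected. -/
def TwoEdgeConnected : Prop :=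
  G.Connected ∧ ∀ e : E, G.numComponentsEdges {e}ᶜ = 1

/-- `G` is 2-vertex-connected: it is connected and deleting any single vertex
leaves it connected. -/
def TwoVertexConnected : Prop :=
  G.Connected ∧ ∀ v : V, G.numComponentsSub {v}ᶜ = 1

/-- `G` has no loops. -/
def Loopless : Prop := ∀ e : E, ¬ (G.ends e).IsDiag

open Classical in
/-- The degree of a vertex, with loops counting twice. -/
noncomputable def degree [Fintype E] (v : V) : ℕ :=
  ∑ e : E, (if G.ends e = s(v, v) then 2 else if v ∈ G.ends e then 1 else 0)

/-- `G` is trivalent: every vertex has degree `3`. -/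
def Trivalent [Fintype E] : Prop := ∀ v : V, G.degree v = 3

/-- `A ⊆ V` is the vertex set of a cycle `v₁, …, vₙ, v₁` of `G`: there are
pairwise distinct vertices `f 0, …, f (n-1)` with range `A` and pairwise
distinct edges joining cyclically consecutive vertices. -/
def IsCycleSet (A : Set V) : Prop :=
  ∃ n : ℕ, 0 < n ∧ ∃ f : ZMod n → V, Function.Injective f ∧ Set.range f = A ∧
    ∃ e : ZMod n → E, Function.Injective e ∧ ∀ i, G.ends (e i) = s(f i, f (i + 1))

/-- The subgraph induced on `A` contains a cycle. -/
def Cyclic (A : Set V) : Prop := ∃ C ⊆ A, G.IsCycleSet C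

/-- The subgraph induced on `A` is acyclic (a forest). -/
def Acyclic (A : Set V) : Prop := ¬ G.Cyclic A

/-- `A` is a circuit of the graph curve matroid `M_G`: `A` is nonempty,
`r*(δ(A)) ≤ |A|`, and no proper nonempty subset `A'` satisfies `r*(δ(A')) ≤ |A'|`. -/
noncomputable def IsCircuitMG (A : Set V) : Prop :=
  A.Nonempty ∧ G.bondRank (G.inc A) ≤ A.ncard ∧
    ∀ A' : Set V, A' ⊂ A → A'.Nonempty → A'.ncard < G.bondRank (G.inc A')

/-- `A` is dependent in the graph curve matroid `M_G`, i.e. contains a circuit. -/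
noncomputable def DepMG (A : Set V) : Prop := ∃ C ⊆ A, G.IsCircuitMG C

/-- `A` is independent in the graph curve matroid `M_G`. -/
noncomputable def IndepMG (A : Set V) : Prop := ¬ G.DepMG A

/-- The rank function of the graph curve matroid `M_G`:
the maximal cardinality of an independent subset. -/
noncomputable def rankMG (A : Set V) : ℕ :=
  sSup {n | ∃ I ⊆ A, G.IndepMG I ∧ I.ncard = n}

/-- `B` is a basis of the graph curve matroid `M_G`:
a maximal independent set. -/
noncomputable def IsBasisMG (B : Set V) : Prop :=
  G.IndepMG B ∧ ∀ I : Set V, G.IndepMG I → B ⊆ I → I = B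

end Multigraph

section CompTools

namespace Multigraph

variable {V E : Type*} [Fintype V] [Fintype E] (G : Multigraph V E)

/-- the edge relation determined by an edge set -/
def erel (B : Set E) : V → V → Prop := fun u v => ∃ e ∈ B, G.ends e = s(u, v)

theorem sym2_exists (z : Sym2 V) : ∃ a b : V, z = s(a, b) :=
  Sym2.ind (fun a b => ⟨a, b, rfl⟩) z

theorem numComp_def (B : Set E) :
    G.numComponentsEdges B = Nat.card (Quot (G.erel B)) := rfl

theorem erel_mono {B B' : Set E} (h : B ⊆ B') {x y : V} (hxy : G.erel B x y) :
    G.erel B' x y := by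
  obtain ⟨e, he, hend⟩ := hxy
  exact ⟨e, h he, hend⟩

theorem numComp_le_card (B : Set E) : G.numComponentsEdges B ≤ Nat.card V :=
  card_quot_le_card _

theorem numComp_antitone {B B' : Set E} (h : B ⊆ B') :
    G.numComponentsEdges B' ≤ G.numComponentsEdges B :=
  card_quot_le_of_imp fun x y hxy => .rel x y (G.erel_mono h hxy)

theorem numComp_empty : G.numComponentsEdges (∅ : Set E) = Nat.card V := by
  rw [numComp_def]
  refine card_quot_bot fun x y hxy => ?_
  obtain ⟨e, he, _⟩ := hxy
  exact absurd he (Set.notMem_empty e)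

theorem erel_insert_iff {B : Set E} {e : E} {a b : V} (hab : G.ends e = s(a, b)) :
    ∀ x y, G.erel (insert e B) x y ↔ pext (G.erel B) a b x y := by
  intro x y
  constructor
  · rintro ⟨e', he', hend⟩
    rcases he' with rfl | he'
    · rw [hab] at hend
      rcases Sym2.eq_iff.1 hend with ⟨rfl, rfl⟩ | ⟨rfl, rfl⟩
      · exact Or.inr (Or.inl ⟨rfl, rfl⟩)
      · exact Or.inr (Or.inr ⟨rfl, rfl⟩)
    · exact Or.inl ⟨e', he', hend⟩
  · rintro (⟨e', he', hend⟩ | ⟨rfl, rfl⟩ | ⟨rfl, rfl⟩)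
    · exact ⟨e', Set.mem_insert_of_mem _ he', hend⟩
    · exact ⟨e, Set.mem_insert _ _, hab⟩
    · exact ⟨e, Set.mem_insert _ _, by rw [hab, Sym2.eq_swap]⟩

theorem numComp_insert {B : Set E} {e : E} {a b : V} (hab : G.ends e = s(a, b)) :
    G.numComponentsEdges (insert e B) = Nat.card (Quot (pext (G.erel B) a b)) := by
  rw [numComp_def]
  exact card_quot_congr (fun x y => G.erel_insert_iff hab x y)

theorem numComp_le_insert_add_one (B : Set E) (e : E) :
    G.numComponentsEdges B ≤ G.numComponentsEdges (insert e B) + 1 := by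
  obtain ⟨a, b, hab⟩ := sym2_exists (G.ends e)
  rw [numComp_insert G hab, numComp_def]
  exact card_quot_le_pext_add_one

theorem numComp_le_union_add (B C : Set E) :
    G.numComponentsEdges B ≤ G.numComponentsEdges (B ∪ C) + C.ncard := by
  refine Set.Finite.induction_on
    (motive := fun D _ => G.numComponentsEdges B ≤ G.numComponentsEdges (B ∪ D) + D.ncard)
    C C.toFinite ?_ ?_
  · simpa using G.numComp_antitone (Set.subset_union_left)
  · intro e C heC hCfin ih
    have h1 : B ∪ insert e C = insert e (B ∪ C) := Set.union_insert
    have h2 : (insert e C).ncard = C.ncard + 1 :=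
      Set.ncard_insert_of_notMem heC hCfin
    rw [h1, h2]
    calc G.numComponentsEdges B ≤ G.numComponentsEdges (B ∪ C) + C.ncard := ih
      _ ≤ (G.numComponentsEdges (insert e (B ∪ C)) + 1) + C.ncard :=
          add_le_add_left (G.numComp_le_insert_add_one _ _) _
      _ = G.numComponentsEdges (insert e (B ∪ C)) + (C.ncard + 1) := by ring

theorem numComp_singlestep {C B : Set E} (hCB : C ⊆ B) (e : E) :
    G.numComponentsEdges B + G.numComponentsEdges (insert e C) ≤
      G.numComponentsEdges C + G.numComponentsEdges (insert e B) := by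
  obtain ⟨a, b, hab⟩ := sym2_exists (G.ends e)
  rw [numComp_insert G hab, numComp_insert G hab, numComp_def G B, numComp_def G C]
  by_cases h : Relation.EqvGen (G.erel B) a b
  · rw [card_quot_pext_eq h]
    have h1 : Nat.card (Quot (pext (G.erel C) a b)) ≤ Nat.card (Quot (G.erel C)) :=
      card_quot_pext_le
    omega
  · have hC : ¬ Relation.EqvGen (G.erel C) a b :=
      fun hc => h (hc.mono fun x y hxy => G.erel_mono hCB hxy)
    have h1 : Nat.card (Quot (pext (G.erel C) a b)) < Nat.card (Quot (G.erel C)) :=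
      card_quot_pext_lt hC
    have h2 : Nat.card (Quot (G.erel B)) ≤ Nat.card (Quot (pext (G.erel B) a b)) + 1 :=
      card_quot_le_pext_add_one
    omega

theorem numComp_supermodular (X Y : Set E) :
    G.numComponentsEdges X + G.numComponentsEdges Y ≤
      G.numComponentsEdges (X ∪ Y) + G.numComponentsEdges (X ∩ Y) := by
  have key : ∀ D : Set E, D.Finite →
      G.numComponentsEdges Y + G.numComponentsEdges ((X ∩ Y) ∪ D) ≤
        G.numComponentsEdges (X ∩ Y) + G.numComponentsEdges (Y ∪ D) := by
    intro D hD
    refine Set.Finite.induction_on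
      (motive := fun D _ => G.numComponentsEdges Y + G.numComponentsEdges ((X ∩ Y) ∪ D) ≤
        G.numComponentsEdges (X ∩ Y) + G.numComponentsEdges (Y ∪ D)) D hD ?_ ?_
    · simp [add_comm]
    · intro e D heD hDfin ih
      have h1 : (X ∩ Y) ∪ insert e D = insert e ((X ∩ Y) ∪ D) := Set.union_insert
      have h2 : Y ∪ insert e D = insert e (Y ∪ D) := Set.union_insert
      have h3 := G.numComp_singlestep (C := (X ∩ Y) ∪ D) (B := Y ∪ D)
        (Set.union_subset_union_left D (Set.inter_subset_right)) e
      rw [h1, h2]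
      omega
  have h := key (X \ Y) (Set.toFinite _)
  have e1 : (X ∩ Y) ∪ (X \ Y) = X := Set.inter_union_diff X Y
  have e2 : Y ∪ (X \ Y) = X ∪ Y := by
    ext x; simp [Set.mem_union, Set.mem_diff]; tauto
  rw [e1, e2] at h
  omega

end Multigraph

end CompTools
section BondTools

namespace Multigraph

variable {V E : Type*} [Fintype V] [Fintype E] {G : Multigraph V E}

theorem card_V_pos (hc : G.numComponentsEdges Set.univ = 1) : 1 ≤ Nat.card V := by
  have h1 : 0 < Nat.card (Quot (G.erel Set.univ)) := by
    rw [← G.numComp_def, hc]; norm_num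
  rw [Nat.card_pos_iff] at h1
  obtain ⟨⟨q⟩, -⟩ := h1
  obtain ⟨v, -⟩ := Quot.exists_rep q
  have : Nonempty V := ⟨v⟩
  exact Nat.one_le_iff_ne_zero.2 (Nat.card_ne_zero.2 ⟨this, inferInstance⟩)

theorem card_le_numComp_add (B : Set E) :
    Nat.card V ≤ G.numComponentsEdges B + B.ncard := by
  have h := G.numComp_le_union_add ∅ B
  rwa [Set.empty_union, G.numComp_empty] at h

theorem numComp_compl_le (B : Set E) :
    G.numComponentsEdges Bᶜ ≤ G.numComponentsEdges Set.univ + B.ncard := by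
  have h := G.numComp_le_union_add Bᶜ B
  rwa [Set.compl_union_self] at h

theorem bondRank_add_numComp (hc : G.numComponentsEdges Set.univ = 1) (B : Set E) :
    G.bondRank B + G.numComponentsEdges Bᶜ = B.ncard + 1 := by
  have h1 : G.numComponentsEdges Bᶜ ≤ Nat.card V := G.numComp_le_card Bᶜ
  have h2 : G.numComponentsEdges Bᶜ ≤ 1 + B.ncard := by
    have := G.numComp_compl_le B; omega
  have h3 : 1 ≤ Nat.card V := card_V_pos hc
  unfold bondRank cycleRank
  rw [hc]
  omega

theorem bondRank_mono (hc : G.numComponentsEdges Set.univ = 1) {B B' : Set E}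
    (h : B ⊆ B') : G.bondRank B ≤ G.bondRank B' := by
  have id1 := bondRank_add_numComp hc B
  have id2 := bondRank_add_numComp hc B'
  have hd : (B' \ B).ncard + B.ncard = B'.ncard :=
    Set.ncard_diff_add_ncard_of_subset h (Set.toFinite _)
  have hk1 : G.numComponentsEdges B'ᶜ ≤
      G.numComponentsEdges (B'ᶜ ∪ (B' \ B)) + (B' \ B).ncard :=
    G.numComp_le_union_add _ _
  have hk2 : B'ᶜ ∪ (B' \ B) = Bᶜ := by
    ext x
    have := @h x
    simp only [Set.mem_union, Set.mem_compl_iff, Set.mem_diff]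
    tauto
  rw [hk2] at hk1
  omega

theorem bondRank_le_genus (hc : G.numComponentsEdges Set.univ = 1) (B : Set E) :
    G.bondRank B + Nat.card V ≤ Nat.card E + 1 := by
  have id1 := bondRank_add_numComp hc B
  have h1 := G.card_le_numComp_add Bᶜ
  have h2 : B.ncard + Bᶜ.ncard = Nat.card E :=
    Set.ncard_add_ncard_compl B (Set.toFinite _) (Set.toFinite _)
  omega

theorem inc_mono {A A' : Set V} (h : A ⊆ A') : G.inc A ⊆ G.inc A' := by
  rintro e ⟨v, hv, hve⟩
  exact ⟨v, h hv, hve⟩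

theorem inc_union (A A' : Set V) : G.inc (A ∪ A') = G.inc A ∪ G.inc A' := by
  ext e
  simp only [inc, Set.mem_setOf_eq, Set.mem_union]
  constructor
  · rintro ⟨v, hv | hv, hve⟩
    · exact Or.inl ⟨v, hv, hve⟩
    · exact Or.inr ⟨v, hv, hve⟩
  · rintro (⟨v, hv, hve⟩ | ⟨v, hv, hve⟩)
    · exact ⟨v, Or.inl hv, hve⟩
    · exact ⟨v, Or.inr hv, hve⟩

theorem rho_mono (hc : G.numComponentsEdges Set.univ = 1) {A A' : Set V} (h : A ⊆ A') :
    G.bondRank (G.inc A) ≤ G.bondRank (G.inc A') :=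
  bondRank_mono hc (inc_mono h)

theorem rho_submod (hc : G.numComponentsEdges Set.univ = 1) (S T : Set V) :
    G.bondRank (G.inc (S ∪ T)) + G.bondRank (G.inc (S ∩ T)) ≤
      G.bondRank (G.inc S) + G.bondRank (G.inc T) := by
  rw [inc_union]
  have hsub : G.inc (S ∩ T) ⊆ G.inc S ∩ G.inc T := by
    rintro e ⟨v, hv, hve⟩
    exact ⟨⟨v, hv.1, hve⟩, ⟨v, hv.2, hve⟩⟩
  have h0 : G.bondRank (G.inc (S ∩ T)) ≤ G.bondRank (G.inc S ∩ G.inc T) :=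
    bondRank_mono hc hsub
  have idS := bondRank_add_numComp hc (G.inc S)
  have idT := bondRank_add_numComp hc (G.inc T)
  have idU := bondRank_add_numComp hc (G.inc S ∪ G.inc T)
  have idI := bondRank_add_numComp hc (G.inc S ∩ G.inc T)
  have hsup := G.numComp_supermodular (G.inc S)ᶜ (G.inc T)ᶜ
  rw [← Set.compl_inter, ← Set.compl_union] at hsup
  have hcard : (G.inc S ∩ G.inc T).ncard + (G.inc S ∪ G.inc T).ncard
      = (G.inc S).ncard + (G.inc T).ncard :=
    Set.ncard_inter_add_ncard_union _ _ (Set.toFinite _) (Set.toFinite _)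
  omega

end Multigraph

end BondTools
section KeyTools

namespace Multigraph

variable {V E : Type*} [Fintype V] [Fintype E] {G : Multigraph V E}

/-- edges with all endpoints in `T` -/
def allIn (G : Multigraph V E) (T : Set V) : Set E := {e | ∀ v ∈ G.ends e, v ∈ T}

/-- edges meeting both `T` and its complement -/
def cross (G : Multigraph V E) (T : Set V) : Set E :=
  {e | e ∈ G.inc T ∧ e ∉ G.allIn T}

theorem allIn_subset_inc (T : Set V) : G.allIn T ⊆ G.inc T := by
  intro e he
  obtain ⟨a, b, hab⟩ := sym2_exists (G.ends e)
  have ha : a ∈ G.ends e := by rw [hab]; exact Sym2.mem_mk_left _ _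
  exact ⟨a, he a ha, ha⟩

theorem ncard_inc_split (T : Set V) :
    (G.inc T).ncard = (G.allIn T).ncard + (G.cross T).ncard := by
  have hU : G.inc T = G.allIn T ∪ G.cross T := by
    ext e
    constructor
    · intro he
      by_cases h : e ∈ G.allIn T
      · exact Or.inl h
      · exact Or.inr ⟨he, h⟩
    · rintro (he | he)
      · exact allIn_subset_inc T he
      · exact he.1
  rw [hU]
  refine Set.ncard_union_eq ?_ (Set.toFinite _) (Set.toFinite _)
  rw [Set.disjoint_left]
  intro e he hce
  exact hce.2 he

open Classical in
theorem sum_indicator_ncard {α : Type*} [Fintype α] (S : Set α) :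
    ∑ e : α, (if e ∈ S then 1 else 0) = S.ncard := by
  classical
  rw [Set.ncard_eq_toFinset_card', ← Set.filter_mem_univ_eq_toFinset, Finset.card_filter]

open Classical in
theorem handshake (h3 : G.Trivalent) (T : Set V) :
    3 * T.ncard = 2 * (G.allIn T).ncard + (G.cross T).ncard := by
  have hdeg : ∑ v ∈ T.toFinset, G.degree v
      = ∑ e : E, ∑ v ∈ T.toFinset,
          (if G.ends e = s(v, v) then 2 else if v ∈ G.ends e then 1 else 0) := by
    unfold Multigraph.degree
    exact Finset.sum_comm
  have per_edge : ∀ e : E,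
      (∑ v ∈ T.toFinset, (if G.ends e = s(v, v) then 2 else if v ∈ G.ends e then 1 else 0))
        = (if e ∈ G.allIn T then 2 else if e ∈ G.inc T then 1 else 0) := by
    intro e
    obtain ⟨a, b, hab⟩ := sym2_exists (G.ends e)
    by_cases hdiag : a = b
    · subst hdiag
      have hval : ∀ v, (if G.ends e = s(v, v) then 2 else if v ∈ G.ends e then 1 else 0)
          = (if v = a then 2 else 0) := by
        intro v
        by_cases hv : v = a
        · subst hv; rw [if_pos hab, if_pos rfl]
        · rw [if_neg, if_neg, if_neg hv]
          · intro hvm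
            rw [hab, Sym2.mem_iff] at hvm
            rcases hvm with rfl | rfl <;> exact hv rfl
          · intro h
            rw [hab, Sym2.eq_iff] at h
            rcases h with ⟨h1, -⟩ | ⟨h1, -⟩ <;> exact hv h1.symm
      rw [Finset.sum_congr rfl fun v _ => hval v,
        Finset.sum_ite_eq' T.toFinset a fun _ => 2]
      simp only [Set.mem_toFinset]
      by_cases haT : a ∈ T
      · rw [if_pos haT, if_pos]
        intro v hv
        rw [hab, Sym2.mem_iff] at hv
        rcases hv with rfl | rfl <;> exact haT
      · rw [if_neg haT, if_neg, if_neg]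
        · rintro ⟨v, hvT, hvm⟩
          rw [hab, Sym2.mem_iff] at hvm
          rcases hvm with rfl | rfl <;> exact haT hvT
        · intro hall
          exact haT (hall a (by rw [hab]; exact Sym2.mem_mk_left _ _))
    · have hval : ∀ v, (if G.ends e = s(v, v) then 2 else if v ∈ G.ends e then 1 else 0)
          = ((if v = a then 1 else 0) + (if v = b then 1 else 0)) := by
        intro v
        rw [if_neg]
        · by_cases hva : v = a
          · subst hva
            rw [if_pos (by rw [hab]; exact Sym2.mem_mk_left _ _), if_pos rfl,
              if_neg hdiag]
          · by_cases hvb : v = b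
            · subst hvb
              rw [if_pos (by rw [hab]; exact Sym2.mem_mk_right _ _), if_neg hva, if_pos rfl]
            · rw [if_neg, if_neg hva, if_neg hvb]
              intro hvm
              rw [hab, Sym2.mem_iff] at hvm
              tauto
        · intro h
          rw [hab, Sym2.eq_iff] at h
          rcases h with ⟨h1, h2⟩ | ⟨h1, h2⟩ <;> exact hdiag (h1.trans h2.symm)
      rw [Finset.sum_congr rfl fun v _ => hval v, Finset.sum_add_distrib,
        Finset.sum_ite_eq' T.toFinset a fun _ => 1,
        Finset.sum_ite_eq' T.toFinset b fun _ => 1]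
      simp only [Set.mem_toFinset]
      have hallin : e ∈ G.allIn T ↔ (a ∈ T ∧ b ∈ T) := by
        constructor
        · intro h
          exact ⟨h a (by rw [hab]; exact Sym2.mem_mk_left _ _),
            h b (by rw [hab]; exact Sym2.mem_mk_right _ _)⟩
        · rintro ⟨h1, h2⟩ v hv
          rw [hab, Sym2.mem_iff] at hv
          rcases hv with rfl | rfl <;> assumption
      have hinc : e ∈ G.inc T ↔ (a ∈ T ∨ b ∈ T) := by
        constructor
        · rintro ⟨v, hvT, hvm⟩
          rw [hab, Sym2.mem_iff] at hvm
          rcases hvm with rfl | rfl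
          · exact Or.inl hvT
          · exact Or.inr hvT
        · rintro (h | h)
          · exact ⟨a, h, by rw [hab]; exact Sym2.mem_mk_left _ _⟩
          · exact ⟨b, h, by rw [hab]; exact Sym2.mem_mk_right _ _⟩
      by_cases haT : a ∈ T <;> by_cases hbT : b ∈ T <;>
        simp [hallin, hinc, haT, hbT]
  have lhs : ∑ v ∈ T.toFinset, G.degree v = 3 * T.ncard := by
    rw [Finset.sum_congr rfl fun v _ => h3 v, Finset.sum_const, smul_eq_mul,
      Set.ncard_eq_toFinset_card' T]
    ring
  have rhs : ∑ e : E, (if e ∈ G.allIn T then 2 else if e ∈ G.inc T then 1 else 0)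
      = 2 * (G.allIn T).ncard + (G.cross T).ncard := by
    have hsplit : ∀ e : E, (if e ∈ G.allIn T then 2 else if e ∈ G.inc T then 1 else 0)
        = 2 * (if e ∈ G.allIn T then 1 else 0) + (if e ∈ G.cross T then 1 else 0) := by
      intro e
      by_cases h1 : e ∈ G.allIn T
      · rw [if_pos h1, if_pos h1, if_neg (fun hc => hc.2 h1)]
      · rw [if_neg h1, if_neg h1]
        by_cases h2 : e ∈ G.inc T
        · rw [if_pos h2, if_pos ⟨h2, h1⟩]
        · rw [if_neg h2, if_neg (fun hc => h2 hc.1)]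
    rw [Finset.sum_congr rfl fun e _ => hsplit e, Finset.sum_add_distrib,
      ← Finset.mul_sum, sum_indicator_ncard, sum_indicator_ncard]
  rw [lhs, Finset.sum_congr rfl fun e _ => per_edge e, rhs] at hdeg
  exact hdeg

/-- `e` has an endpoint in `K` and an endpoint outside `K`. -/
def splits (G : Multigraph V E) (K : Set V) (e : E) : Prop :=
  (∃ v ∈ G.ends e, v ∈ K) ∧ (∃ v ∈ G.ends e, v ∉ K)

open Classical in
theorem two_le_numComp_of_no_splits {K : Set V} (hK : K.Nonempty) (hKc : Kᶜ.Nonempty)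
    {S : Set E} (hS : ∀ e ∈ S, ¬ G.splits K e) : 2 ≤ G.numComponentsEdges S := by
  have hwd : ∀ x y, G.erel S x y →
      (fun v => if v ∈ K then true else false) x = (fun v => if v ∈ K then true else false) y := by
    rintro x y ⟨e, heS, hend⟩
    have hx : x ∈ G.ends e := by rw [hend]; exact Sym2.mem_mk_left _ _
    have hy : y ∈ G.ends e := by rw [hend]; exact Sym2.mem_mk_right _ _
    by_cases hxK : x ∈ K <;> by_cases hyK : y ∈ K <;> simp only [hxK, hyK, if_pos, if_neg,
      if_true, if_false, reduceIte]
    · exact absurd ⟨⟨x, hx, hxK⟩, ⟨y, hy, hyK⟩⟩ (hS e heS)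
    · exact absurd ⟨⟨y, hy, hyK⟩, ⟨x, hx, hxK⟩⟩ (hS e heS)
  have hs : Function.Surjective (Quot.lift _ hwd : Quot (G.erel S) → Bool) := by
    intro bb
    cases bb
    · obtain ⟨w, hw⟩ := hKc
      exact ⟨Quot.mk _ w, by simp [if_neg hw]⟩
    · obtain ⟨w, hw⟩ := hK
      exact ⟨Quot.mk _ w, by simp [if_pos hw]⟩
  calc 2 = Nat.card Bool := by simp
    _ ≤ Nat.card (Quot (G.erel S)) := Nat.card_le_card_of_surjective _ hs
    _ = G.numComponentsEdges S := (G.numComp_def S).symm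

theorem exists_two_splits (h2 : G.TwoEdgeConnected) {K : Set V}
    (hK : K.Nonempty) (hKc : Kᶜ.Nonempty) :
    ∃ e₁ e₂, e₁ ≠ e₂ ∧ G.splits K e₁ ∧ G.splits K e₂ := by
  have h1 : ∃ e, G.splits K e := by
    by_contra h
    push_neg at h
    have := G.two_le_numComp_of_no_splits hK hKc (S := Set.univ) (fun e _ => h e)
    rw [h2.1] at this
    omega
  obtain ⟨e₁, he₁⟩ := h1
  have h2' : ∃ e₂, e₂ ≠ e₁ ∧ G.splits K e₂ := by
    by_contra h
    push_neg at h
    have hS : ∀ e ∈ ({e₁}ᶜ : Set E), ¬ G.splits K e := by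
      intro e he
      rw [Set.mem_compl_iff, Set.mem_singleton_iff] at he
      exact h e he
    have := G.two_le_numComp_of_no_splits hK hKc hS
    rw [h2.2 e₁] at this
    omega
  obtain ⟨e₂, hne, he₂⟩ := h2'
  exact ⟨e₁, e₂, hne.symm, he₁, he₂⟩

open Classical in
theorem key_ineq (h3 : G.Trivalent) (h2 : G.TwoEdgeConnected) {T : Set V}
    (hT : T.Nonempty) : T.ncard + 2 ≤ 2 * G.bondRank (G.inc T) := by
  obtain ⟨t0, ht0⟩ := hT
  set B : Set E := G.inc T with hB
  set r : V → V → Prop := G.erel Bᶜ with hr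
  set S2 : Set (Quot r) := {q | ∀ v, Quot.mk r v = q → v ∉ T} with hS2
  -- classes meeting T are at most |T|
  have h1 : S2ᶜ.ncard ≤ T.ncard := by
    have hex : ∀ q : ↥(S2ᶜ), ∃ v, Quot.mk r v = q.1 ∧ v ∈ T := by
      rintro ⟨q, hq⟩
      rw [Set.mem_compl_iff, hS2, Set.mem_setOf_eq] at hq
      push_neg at hq
      exact hq
    choose f hf1 hf2 using hex
    have hinj : Function.Injective (fun q => (⟨f q, hf2 q⟩ : ↥T)) := by
      intro q1 q2 h
      have hval : f q1 = f q2 := congrArg Subtype.val h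
      apply Subtype.ext
      rw [← hf1 q1, ← hf1 q2, hval]
    have hle := Nat.card_le_card_of_injective _ hinj
    rwa [Nat.card_coe_set_eq, Nat.card_coe_set_eq] at hle
  have hk : S2.ncard + S2ᶜ.ncard = Nat.card (Quot r) :=
    Set.ncard_add_ncard_compl S2 (Set.toFinite _) (Set.toFinite _)
  -- each class avoiding T has two boundary edges, all in `cross T`
  have hmemcross : ∀ (q : ↥S2) (e : E),
      G.splits {v | Quot.mk r v = q.1} e → e ∈ G.cross T := by
    rintro ⟨q, hq⟩ e ⟨⟨u, hu_ends, hu_in⟩, ⟨w, hw_ends, hw_out⟩⟩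
    simp only [Set.mem_setOf_eq] at hu_in hw_out
    have huT : u ∉ T := hq u hu_in
    have hne : u ≠ w := fun h => hw_out (h ▸ hu_in)
    have hinc : e ∈ G.inc T := by
      by_contra hni
      have hrel : r u w := ⟨e, hni, (Sym2.mem_and_mem_iff hne).mp ⟨hu_ends, hw_ends⟩⟩
      exact hw_out (hu_in ▸ (Quot.sound hrel).symm)
    refine ⟨hinc, fun hall => huT (hall u hu_ends)⟩
  have huniq : ∀ (q q' : ↥S2) (e : E),
      G.splits {v | Quot.mk r v = q.1} e → G.splits {v | Quot.mk r v = q'.1} e → q = q' := by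
    rintro ⟨q, hq⟩ ⟨q', hq'⟩ e ⟨⟨u, hu_ends, hu_in⟩, -⟩ ⟨⟨u', hu'_ends, hu'_in⟩, -⟩
    simp only [Set.mem_setOf_eq] at hu_in hu'_in
    by_contra hqq'
    have hne : u ≠ u' := by
      rintro rfl
      exact hqq' (Subtype.ext (hu_in.symm.trans hu'_in))
    obtain ⟨v, hvT, hv_ends⟩ :=
      (hmemcross ⟨q, hq⟩ e ⟨⟨u, hu_ends, hu_in⟩, ⟨u', hu'_ends, fun hmem => by
        simp only [Set.mem_setOf_eq] at hmem
        exact hqq' (Subtype.ext (hmem.symm.trans hu'_in))⟩⟩).1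
    have hends : G.ends e = s(u, u') := (Sym2.mem_and_mem_iff hne).mp ⟨hu_ends, hu'_ends⟩
    rw [hends, Sym2.mem_iff] at hv_ends
    rcases hv_ends with rfl | rfl
    · exact hq v hu_in hvT
    · exact hq' v hu'_in hvT
  have h3' : 2 * S2.ncard ≤ (G.cross T).ncard := by
    have hsplit : ∀ q : ↥S2, ∃ p : E × E, p.1 ≠ p.2 ∧
        G.splits {v | Quot.mk r v = q.1} p.1 ∧ G.splits {v | Quot.mk r v = q.1} p.2 := by
      rintro ⟨q, hq⟩
      obtain ⟨w, hw⟩ := Quot.exists_rep q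
      have hK : Set.Nonempty {v | Quot.mk r v = q} := ⟨w, hw⟩
      have hKc : Set.Nonempty {v | Quot.mk r v = q}ᶜ := ⟨t0, fun hmem => (hq t0 hmem) ht0⟩
      obtain ⟨e₁, e₂, hne, hs1, hs2⟩ := G.exists_two_splits h2 hK hKc
      exact ⟨(e₁, e₂), hne, hs1, hs2⟩
    choose p hne hp1 hp2 using hsplit
    set Φ : ↥S2 × Bool → ↥(G.cross T) := fun x =>
      if x.2 then ⟨(p x.1).1, hmemcross x.1 _ (hp1 x.1)⟩
      else ⟨(p x.1).2, hmemcross x.1 _ (hp2 x.1)⟩ with hΦ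
    have hΦinj : Function.Injective Φ := by
      rintro ⟨q, b⟩ ⟨q', b'⟩ h
      have hval : (Φ (q, b)).1 = (Φ (q', b')).1 := congrArg Subtype.val h
      cases b <;> cases b' <;> simp only [hΦ, if_pos, if_neg, Bool.false_eq_true,
        if_true, if_false, reduceIte] at hval
      · have : q = q' := huniq q q' _ (hp2 q) (hval ▸ hp2 q')
        rw [this]
      · exfalso
        have : q = q' := huniq q q' _ (hp2 q) (hval ▸ hp1 q')
        subst this
        exact hne q hval.symm
      · exfalso
        have : q = q' := huniq q q' _ (hp1 q) (hval ▸ hp2 q')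
        subst this
        exact hne q hval
      · have : q = q' := huniq q q' _ (hp1 q) (hval ▸ hp1 q')
        rw [this]
    have hle := Nat.card_le_card_of_injective Φ hΦinj
    rwa [Nat.card_prod, Nat.card_coe_set_eq, Nat.card_coe_set_eq,
      Nat.card_eq_fintype_card, Fintype.card_bool, mul_comm] at hle
  have idB := bondRank_add_numComp h2.1 B
  have hhs := handshake h3 T
  have hsc := ncard_inc_split (G := G) T
  have hnc : G.numComponentsEdges Bᶜ = Nat.card (Quot r) := G.numComp_def Bᶜ
  rw [← hB] at hsc
  omega

end Multigraph

end KeyTools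
section MatroidTools

namespace Multigraph

variable {V E : Type*} [Fintype V] [Fintype E] {G : Multigraph V E}

theorem exists_circuit_of_dep :
    ∀ (n : ℕ) (A : Set V), A.ncard = n → A.Nonempty →
      G.bondRank (G.inc A) ≤ A.ncard → ∃ C ⊆ A, G.IsCircuitMG C := by
  intro n
  induction n using Nat.strong_induction_on with
  | _ n ih =>
    intro A hn hA hdep
    by_cases hmin : ∃ A' : Set V, (A' ⊂ A ∧ A'.Nonempty) ∧ G.bondRank (G.inc A') ≤ A'.ncard
    · obtain ⟨A', ⟨hsub, hne⟩, hle⟩ := hmin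
      have hlt : A'.ncard < n := hn ▸ Set.ncard_lt_ncard hsub (Set.toFinite _)
      obtain ⟨C, hCsub, hC⟩ := ih A'.ncard hlt A' rfl hne hle
      exact ⟨C, hCsub.trans hsub.subset, hC⟩
    · push_neg at hmin
      refine ⟨A, subset_rfl, hA, hdep, ?_⟩
      intro A' hsub hne
      exact hmin A' ⟨hsub, hne⟩
 
theorem indep_empty : G.IndepMG (∅ : Set V) := by
  rintro ⟨C, hsub, hne, -⟩
  obtain ⟨x, hx⟩ := hne
  exact absurd (hsub hx) (Set.notMem_empty x)

theorem indep_lower {I : Set V} (hI : G.IndepMG I) {A : Set V} (hA : A ⊆ I)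
    (hne : A.Nonempty) : A.ncard + 1 ≤ G.bondRank (G.inc A) := by
  by_contra hle
  push_neg at hle
  obtain ⟨C, hCsub, hC⟩ := exists_circuit_of_dep (G := G) A.ncard A rfl hne (by omega)
  exact hI ⟨C, hCsub.trans hA, hC⟩

/-- a set that is nonempty and tight for the independent set `I` -/
def tightSet (G : Multigraph V E) (I S : Set V) : Prop :=
  S.Nonempty ∧ G.bondRank (G.inc S) ≤ (S ∩ I).ncard + 1

theorem tight_merge (h3 : G.Trivalent) (h2 : G.TwoEdgeConnected) {I : Set V}
    (hI : G.IndepMG I) {S T : Set V} (hS : G.tightSet I S) (hT : G.tightSet I T)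
    (hST : (S ∩ T).Nonempty) : G.tightSet I (S ∪ T) := by
  have hsubm := rho_submod h2.1 S T
  have hlow : (S ∩ T ∩ I).ncard + 1 ≤ G.bondRank (G.inc (S ∩ T)) := by
    rcases Set.eq_empty_or_nonempty (S ∩ T ∩ I) with hemp | hne
    · rw [hemp, Set.ncard_empty]
      have hkey := key_ineq h3 h2 hST
      have h1 : 0 < (S ∩ T).ncard := (Set.ncard_pos (Set.toFinite _)).2 hST
      omega
    · have h1 := indep_lower hI (Set.inter_subset_right : S ∩ T ∩ I ⊆ I) hne
      have h2' := rho_mono h2.1 (Set.inter_subset_left : S ∩ T ∩ I ⊆ S ∩ T)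
      omega
  have hid1 : (S ∩ I) ∩ (T ∩ I) = S ∩ T ∩ I := by
    ext x; simp only [Set.mem_inter_iff]; tauto
  have hid2 : (S ∩ I) ∪ (T ∩ I) = (S ∪ T) ∩ I := by
    ext x; simp only [Set.mem_inter_iff, Set.mem_union]; tauto
  have hcard := Set.ncard_inter_add_ncard_union (S ∩ I) (T ∩ I)
    (Set.toFinite _) (Set.toFinite _)
  rw [hid1, hid2] at hcard
  obtain ⟨hSne, hSb⟩ := hS
  obtain ⟨hTne, hTb⟩ := hT
  refine ⟨hSne.mono Set.subset_union_left, ?_⟩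
  omega

theorem tight_merge_many (h3 : G.Trivalent) (h2 : G.TwoEdgeConnected) {I : Set V}
    (hI : G.IndepMG I) {C : Set V} (hC : G.tightSet I C) (𝒮 : Finset (Set V))
    (h𝒮 : ∀ S ∈ 𝒮, G.tightSet I S ∧ (S ∩ C).Nonempty) :
    G.tightSet I (C ∪ ⋃ S ∈ 𝒮, S) := by
  classical
  induction 𝒮 using Finset.induction_on with
  | empty => simpa using hC
  | @insert S₀ 𝒮 hS₀ ih =>
    have hprev := ih fun S hS => h𝒮 S (Finset.mem_insert_of_mem hS)
    have h₀ := h𝒮 S₀ (Finset.mem_insert_self _ _)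
    have hne : (S₀ ∩ (C ∪ ⋃ S ∈ 𝒮, S)).Nonempty := by
      obtain ⟨x, hx1, hx2⟩ := h₀.2
      exact ⟨x, hx1, Or.inl hx2⟩
    have hmerge := tight_merge h3 h2 hI h₀.1 hprev hne
    have heq : S₀ ∪ (C ∪ ⋃ S ∈ 𝒮, S) = C ∪ ⋃ S ∈ insert S₀ 𝒮, S := by
      rw [Finset.set_biUnion_insert]
      ext x; simp only [Set.mem_union]; tauto
    rwa [heq] at hmerge

theorem tight_cover (h3 : G.Trivalent) (h2 : G.TwoEdgeConnected) {I : Set V}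
    (hI : G.IndepMG I) (hmax : ∀ J, G.IndepMG J → I ⊆ J → J = I) :
    ∀ W : Finset V, (↑W ∩ I = ∅) → ∃ 𝒯 : Finset (Set V),
      (∀ S ∈ 𝒯, G.tightSet I S) ∧
      (∀ S ∈ 𝒯, ∀ S' ∈ 𝒯, S ≠ S' → S ∩ S' = ∅) ∧
      (↑W ⊆ ⋃ S ∈ 𝒯, S) := by
  classical
  intro W
  induction W using Finset.induction_on with
  | empty => exact fun _ => ⟨∅, by simp, by simp, by simp⟩
  | @insert v W hvW ih =>
    intro hins
    have hWI : ↑W ∩ I = ∅ := by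
      rw [Set.eq_empty_iff_forall_notMem] at hins ⊢
      intro x hx
      exact hins x ⟨by simp [hx.1], hx.2⟩
    have hvI : v ∉ I := by
      rw [Set.eq_empty_iff_forall_notMem] at hins
      intro hv
      exact hins v ⟨by simp, hv⟩
    obtain ⟨𝒯, htight, hdisj, hcover⟩ := ih hWI
    -- find a tight set containing `v`
    have hdep : ¬ G.IndepMG (insert v I) := by
      intro hind
      have heq := hmax _ hind (Set.subset_insert v I)
      exact hvI (heq ▸ Set.mem_insert v I)
    rw [IndepMG, not_not] at hdep
    obtain ⟨C, hCsub, hCirc⟩ := hdep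
    have hvC : v ∈ C := by
      by_contra hvC
      refine hI ⟨C, ?_, hCirc⟩
      intro x hx
      rcases hCsub hx with rfl | hxI
      · exact absurd hx hvC
      · exact hxI
    have hCtight : G.tightSet I C := by
      refine ⟨hCirc.1, ?_⟩
      have hCI : C ∩ I = C \ {v} := by
        ext x
        simp only [Set.mem_inter_iff, Set.mem_diff, Set.mem_singleton_iff]
        constructor
        · rintro ⟨hx, hxI⟩
          exact ⟨hx, fun h => hvI (h ▸ hxI)⟩
        · rintro ⟨hx, hxv⟩
          rcases hCsub hx with rfl | hxI
          · exact absurd rfl hxv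
          · exact ⟨hx, hxI⟩
      have hC1 : 0 < C.ncard := (Set.ncard_pos (Set.toFinite _)).2 hCirc.1
      have hCd : (C \ {v}).ncard = C.ncard - 1 :=
        Set.ncard_diff_singleton_of_mem hvC
      have hCb := hCirc.2.1
      rw [hCI, hCd]
      omega
    -- merge C with all intersecting members of 𝒯
    set 𝒮 : Finset (Set V) := 𝒯.filter (fun S => (S ∩ C).Nonempty) with h𝒮
    set U : Set V := C ∪ ⋃ S ∈ 𝒮, S with hU
    have hUtight : G.tightSet I U :=
      tight_merge_many h3 h2 hI hCtight 𝒮 fun S hS => by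
        rw [h𝒮, Finset.mem_filter] at hS
        exact ⟨htight S hS.1, hS.2⟩
    refine ⟨insert U (𝒯 \ 𝒮), ?_, ?_, ?_⟩
    · intro S hS
      rcases Finset.mem_insert.1 hS with rfl | hS
      · exact hUtight
      · exact htight S (Finset.mem_sdiff.1 hS).1
    · have hUS : ∀ S ∈ 𝒯 \ 𝒮, U ∩ S = ∅ := by
        intro S hS
        rw [Finset.mem_sdiff] at hS
        rw [Set.eq_empty_iff_forall_notMem]
        rintro x ⟨hxU, hxS⟩
        rcases hxU with hxC | hxB
        · exact hS.2 (by
            rw [h𝒮, Finset.mem_filter]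
            exact ⟨hS.1, ⟨x, hxS, hxC⟩⟩)
        · rw [Set.mem_iUnion₂] at hxB
          obtain ⟨S', hS', hxS'⟩ := hxB
          have hS'𝒯 : S' ∈ 𝒯 := (Finset.mem_filter.1 hS').1
          have hne : S' ≠ S := by
            rintro rfl
            exact hS.2 hS'
          have := hdisj S' hS'𝒯 S hS.1 hne
          rw [Set.eq_empty_iff_forall_notMem] at this
          exact this x ⟨hxS', hxS⟩
      intro S hS S' hS' hne
      rcases Finset.mem_insert.1 hS with rfl | hS
      · rcases Finset.mem_insert.1 hS' with rfl | hS'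
        · exact absurd rfl hne
        · exact hUS S' hS'
      · rcases Finset.mem_insert.1 hS' with rfl | hS'
        · rw [Set.inter_comm]
          exact hUS S hS
        · exact hdisj S (Finset.mem_sdiff.1 hS).1 S' (Finset.mem_sdiff.1 hS').1 hne
    · intro x hx
      rw [Finset.coe_insert, Set.mem_insert_iff] at hx
      rw [Set.mem_iUnion₂]
      rcases hx with rfl | hxW
      · exact ⟨U, Finset.mem_insert_self _ _, Or.inl hvC⟩
      · have := hcover hxW
        rw [Set.mem_iUnion₂] at this
        obtain ⟨S, hS, hxS⟩ := this
        by_cases hS𝒮 : S ∈ 𝒮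
        · refine ⟨U, Finset.mem_insert_self _ _, Or.inr ?_⟩
          rw [Set.mem_iUnion₂]
          exact ⟨S, hS𝒮, hxS⟩
        · exact ⟨S, Finset.mem_insert_of_mem (Finset.mem_sdiff.2 ⟨hS, hS𝒮⟩), hxS⟩

theorem tight_count (h3 : G.Trivalent) (h2 : G.TwoEdgeConnected) {I : Set V}
    (hI : G.IndepMG I) (𝒯 : Finset (Set V))
    (htight : ∀ S ∈ 𝒯, G.tightSet I S)
    (hdisj : ∀ S ∈ 𝒯, ∀ S' ∈ 𝒯, S ≠ S' → S ∩ S' = ∅) :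
    (⋃ S ∈ 𝒯, S).ncard ≤ 2 * (I ∩ ⋃ S ∈ 𝒯, S).ncard := by
  classical
  induction 𝒯 using Finset.induction_on with
  | empty => simp
  | @insert S₀ 𝒯 hS₀ ih =>
    rw [Finset.set_biUnion_insert]
    have hd : Disjoint S₀ (⋃ S ∈ 𝒯, S) := by
      rw [Set.disjoint_left]
      intro x hx hxB
      rw [Set.mem_iUnion₂] at hxB
      obtain ⟨S, hS, hxS⟩ := hxB
      have hne : S₀ ≠ S := by
        rintro rfl
        exact hS₀ hS
      have := hdisj S₀ (Finset.mem_insert_self _ _) S (Finset.mem_insert_of_mem hS) hne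
      rw [Set.eq_empty_iff_forall_notMem] at this
      exact this x ⟨hx, hxS⟩
    have h1 : (S₀ ∪ ⋃ S ∈ 𝒯, S).ncard = S₀.ncard + (⋃ S ∈ 𝒯, S).ncard :=
      Set.ncard_union_eq hd (Set.toFinite _) (Set.toFinite _)
    have h2' : (I ∩ (S₀ ∪ ⋃ S ∈ 𝒯, S)).ncard
        = (I ∩ S₀).ncard + (I ∩ ⋃ S ∈ 𝒯, S).ncard := by
      rw [Set.inter_union_distrib_left]
      exact Set.ncard_union_eq (hd.mono Set.inter_subset_right Set.inter_subset_right)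
        (Set.toFinite _) (Set.toFinite _)
    have h3' : S₀.ncard ≤ 2 * (I ∩ S₀).ncard := by
      obtain ⟨hne, hb⟩ := htight S₀ (Finset.mem_insert_self _ _)
      have hkey := key_ineq h3 h2 hne
      rw [Set.inter_comm]
      omega
    have hrest := ih (fun S hS => htight S (Finset.mem_insert_of_mem hS))
      (fun S hS S' hS' h => hdisj S (Finset.mem_insert_of_mem hS) S'
        (Finset.mem_insert_of_mem hS') h)
    omega

end Multigraph

end MatroidTools





/-- For a trivalent 2-edge-connected finite graph `G` of genus
`g = |E| - |V| + 1` (so `|V| = 2g - 2` and `|E| = 3g - 3`), the rank of the graph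
curve matroid `M_G` is `g - 1`. -/
theorem rankMG_univ_eq {V E : Type*} [Fintype V] [Fintype E]
    (G : Multigraph V E) (h3 : G.Trivalent) (h2 : G.TwoEdgeConnected)
    (g : ℕ) (hg : Nat.card E + 1 = g + Nat.card V) :
    G.rankMG Set.univ + 1 = g := by
  classical
  have hc := h2.1
  have hn1 : 1 ≤ Nat.card V := Multigraph.card_V_pos hc
  -- handshake for the whole graph: 3|V| = 2|E|
  have hhu := Multigraph.handshake h3 (Set.univ : Set V)
  have hau : G.allIn Set.univ = (Set.univ : Set E) := by
    ext e; simp [Multigraph.allIn]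
  have hcu : G.cross Set.univ = (∅ : Set E) := by
    ext e
    simp only [Multigraph.cross, Set.mem_setOf_eq, Set.mem_empty_iff_false, iff_false,
      not_and, not_not, hau]
    intro _
    exact Set.mem_univ e
  rw [hau, hcu, Set.ncard_univ, Set.ncard_univ, Set.ncard_empty] at hhu
  have hg1 : 1 ≤ g := by omega
  have hn2g : Nat.card V + 2 = 2 * g := by omega
  -- upper bound for independent sets
  have hub : ∀ I : Set V, G.IndepMG I → I.ncard + 1 ≤ g := by
    intro I hI
    by_contra hle
    push_neg at hle
    obtain ⟨A, hAI, hAcard⟩ := Set.exists_subset_card_eq (s := I) (n := g) (by omega)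
    have hAne : A.Nonempty := by
      rw [← Set.ncard_pos (Set.toFinite _), hAcard]
      omega
    have hAb : G.bondRank (G.inc A) ≤ A.ncard := by
      have := Multigraph.bondRank_le_genus hc (G.inc A)
      omega
    obtain ⟨C, hCsub, hC⟩ := Multigraph.exists_circuit_of_dep (G := G) A.ncard A rfl hAne hAb
    exact hI ⟨C, hCsub.trans hAI, hC⟩
  -- the rank is attained by some maximal independent set
  set Sset : Set ℕ := {n | ∃ I ⊆ (Set.univ : Set V), G.IndepMG I ∧ I.ncard = n} with hSset
  have hne : Sset.Nonempty :=
    ⟨0, ∅, Set.subset_univ _, Multigraph.indep_empty, Set.ncard_empty V⟩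
  have hbdd : BddAbove Sset := by
    refine ⟨g, ?_⟩
    rintro n ⟨I, -, hI, rfl⟩
    have := hub I hI
    omega
  obtain ⟨I, -, hI, hIcard⟩ := Nat.sSup_mem hne hbdd
  have hmax : ∀ J, G.IndepMG J → I ⊆ J → J = I := by
    intro J hJ hIJ
    have hJle : J.ncard ≤ sSup Sset := le_csSup hbdd ⟨J, Set.subset_univ _, hJ, rfl⟩
    exact (Set.eq_of_subset_of_ncard_le hIJ (by omega) (Set.toFinite _)).symm
  -- lower bound via the tight cover of the complement of I
  have hWint : ↑(Iᶜ.toFinset) ∩ I = ∅ := by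
    rw [Set.eq_empty_iff_forall_notMem]
    rintro x ⟨hx1, hx2⟩
    rw [Finset.mem_coe, Set.mem_toFinset] at hx1
    exact hx1 hx2
  obtain ⟨𝒯, htight, hdisj, hcover⟩ :=
    Multigraph.tight_cover h3 h2 hI hmax Iᶜ.toFinset hWint
  set U : Set V := ⋃ S ∈ 𝒯, S with hU
  have hcount := Multigraph.tight_count h3 h2 hI 𝒯 htight hdisj
  rw [← hU] at hcount
  have hcompl : Uᶜ ⊆ I := by
    intro x hx
    by_contra hxI
    have hxW : x ∈ ↑(Iᶜ.toFinset) := by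
      rw [Set.mem_toFinset]
      exact hxI
    exact hx (hcover hxW)
  have h5 : U.ncard + Uᶜ.ncard = Nat.card V :=
    Set.ncard_add_ncard_compl U (Set.toFinite _) (Set.toFinite _)
  have h6 : (I ∩ U).ncard + (I \ U).ncard = I.ncard :=
    Set.ncard_inter_add_ncard_diff_eq_ncard I U (Set.toFinite _)
  have h7 : Uᶜ.ncard ≤ (I \ U).ncard := by
    refine Set.ncard_le_ncard ?_ (Set.toFinite _)
    intro x hx
    exact ⟨hcompl hx, hx⟩
  -- conclude
  have hfinal : I.ncard + 1 = g := by
    have := hub I hI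
    omega
  show sSup Sset + 1 = g
  omega
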